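/- For a single data point x = 1 and a single hidden neuron, the regularized score-matching objective f(w, α, b, b₀) = ½((w + b)₊·α + b₀)² + w·α·𝟙{w + b ≥ 0} + (β/2)(w² + α²) is unbounded below whenever 0 ≤ β < 1; specifically, choosing b = −w + √(1−β), b₀ = 0, α = −w gives objective value (β−1)w²/2, which tends to −∞ as w → ∞. -/

import Mathlib

/-- For a single data point `x = 1` and a single hidden neuron, the regularized
score-matching objective
`f (w, α, b, b₀) = ½((w+b)₊ α + b₀)² + w α 𝟙{w+b ≥ 0} + (β/2)(w² + α²)`
is unbounded below whenever `0 ≤ β < 1`; choosing `b = -w + √(1-β)`, `b₀ = 0`,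
`α = -w` gives value `(β-1) w² / 2`, which tends to `-∞` as `w → ∞`. -/
theorem stmt_0 (β : ℝ) (hβ0 : 0 ≤ β) (hβ1 : β < 1)
    (f : ℝ → ℝ → ℝ → ℝ → ℝ)
    (hf : ∀ w α b b₀, f w α b b₀ =
      (1/2) * (max (w + b) 0 * α + b₀)^2
        + w * α * (if 0 ≤ w + b then (1:ℝ) else 0)
        + (β/2) * (w^2 + α^2)) :
    (∀ w : ℝ, f w (-w) (-w + Real.sqrt (1 - β)) 0 = (β - 1) * w^2 / 2) ∧
    (∀ M : ℝ, ∃ w α b b₀ : ℝ, f w α b b₀ < M) ∧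
    Filter.Tendsto (fun w : ℝ => (β - 1) * w^2 / 2) Filter.atTop Filter.atBot := by
  have h1 : (0:ℝ) ≤ 1 - β := by linarith
  have hs : 0 ≤ Real.sqrt (1 - β) := Real.sqrt_nonneg _
  have hsq : Real.sqrt (1 - β) ^ 2 = 1 - β := Real.sq_sqrt h1
  have key : ∀ w : ℝ, f w (-w) (-w + Real.sqrt (1 - β)) 0 = (β - 1) * w^2 / 2 := by
    intro w
    rw [hf]
    have hwb : w + (-w + Real.sqrt (1 - β)) = Real.sqrt (1 - β) := by ring
    rw [hwb, max_eq_left hs, if_pos hs]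
    nlinarith [hsq]
  refine ⟨key, ?_, ?_⟩
  · intro M
    obtain ⟨w, hw⟩ : ∃ w : ℝ, (β - 1) * w^2 / 2 < M := by
      refine ⟨Real.sqrt ((2 * |M| + 2) / (1 - β)), ?_⟩
      have h2 : Real.sqrt ((2 * |M| + 2) / (1 - β)) ^ 2 = (2 * |M| + 2) / (1 - β) := by
        apply Real.sq_sqrt
        positivity
      rw [h2]
      have hne : (1 - β) ≠ 0 := by linarith
      have : (β - 1) * ((2 * |M| + 2) / (1 - β)) = -(2 * |M| + 2) := by
        rw [mul_div_assoc', div_eq_iff hne]; ring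
      rw [this]
      have := neg_abs_le M
      nlinarith
    exact ⟨w, -w, -w + Real.sqrt (1 - β), 0, by rw [key]; exact hw⟩
  · have : Filter.Tendsto (fun w : ℝ => w * w) Filter.atTop Filter.atTop :=
      Filter.Tendsto.atTop_mul_atTop₀ Filter.tendsto_id Filter.tendsto_id
    have h := Filter.Tendsto.const_mul_atTop (by linarith : (0:ℝ) < (1 - β)/2) this
    have heq : (fun w : ℝ => (β - 1) * w^2 / 2) = fun w : ℝ => -((1 - β)/2 * (w * w)) := by
      funext w; ring
    rw [heq]
    exact Filter.tendsto_neg_atBot_iff.mpr h
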